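/- arXiv:1603.02867 — 2 statements merged into one kernel-verified Lean document; each statement's English description precedes it below -/
import Mathlib

section
/- Let W be a convex normal integrand on ℝ^n × Ω. If for every y ∈ dom EW the univariate normal integrand h(η,ω) := W(η·y(ω), ω) satisfies condition (RAE+), then λ·dom EW ⊆ dom EW for every λ ≥ 1. If for every y ∈ dom EW the integrand h(η,ω) := W(η·y(ω), ω) satisfies condition (RAE−), then λ·dom EW ⊆ dom EW for every λ ∈ (0,1]. -/
open MeasureTheory Finset
open scoped ENNReal NNReal

noncomputable section

namespace IlliquidALM

/-- `EReal` to `ℝ≥0∞`: the positive part. -/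
def etoENNReal (x : EReal) : ℝ≥0∞ := if x = ⊤ then ⊤ else ENNReal.ofReal x.toReal

/-- Extended-real expectation with the convention that it equals `+∞` unless the
positive part is integrable. -/
def eExp {Ω : Type*} [MeasurableSpace Ω] (P : Measure Ω) (f : Ω → EReal) : EReal :=
  if ∫⁻ ω, etoENNReal (f ω) ∂P = ⊤ then ⊤
  else ((∫⁻ ω, etoENNReal (f ω) ∂P).toEReal - (∫⁻ ω, etoENNReal (-f ω) ∂P).toEReal)

/-- Convexity of an extended-real-valued function. -/
def EConvexOn {α : Type*} [AddCommMonoid α] [Module ℝ α] (f : α → EReal) : Prop :=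
  ∀ x y : α, ∀ a b : ℝ, 0 ≤ a → 0 ≤ b → a + b = 1 →
    f (a • x + b • y) ≤ (a : EReal) * f x + (b : EReal) * f y

/-- Joint measurability of an integrand (w.r.t. the ambient σ-algebra). -/
def JointlyMeasurable {Ω α : Type*} [MeasurableSpace α] [MeasurableSpace Ω]
    (f : α → Ω → EReal) : Prop :=
  Measurable fun p : α × Ω => f p.1 p.2

/-- Condition (RAE+) for a univariate normal integrand `h` on `ℝ × Ω`. -/
def RAEplus {Ω : Type*} [MeasurableSpace Ω] (P : Measure Ω) (h : ℝ → Ω → EReal) : Prop :=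
  ∃ l : ℝ, 1 < l ∧ ∃ ybar : Ω → ℝ, Measurable ybar ∧
    eExp P (fun ω => h (ybar ω) ω) ≠ ⊤ ∧
    ∃ C : ℝ, 0 ≤ C ∧ ∀ᵐ ω ∂P, ∀ η : ℝ, ybar ω ≤ η →
      h (l * η) ω ≤ (C : EReal) * h η ω

/-- Condition (RAE−) for a univariate normal integrand `h` on `ℝ × Ω`. -/
def RAEminus {Ω : Type*} [MeasurableSpace Ω] (P : Measure Ω) (h : ℝ → Ω → EReal) : Prop :=
  ∃ l : ℝ, 0 < l ∧ l < 1 ∧ ∃ ybar : Ω → ℝ, Measurable ybar ∧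
    eExp P (fun ω => h (ybar ω) ω) ≠ ⊤ ∧
    ∃ C : ℝ, 0 < C ∧ ∀ᵐ ω ∂P, ∀ η : ℝ, 0 ≤ η → η ≤ ybar ω →
      h (l * η) ω ≤ (C : EReal) * h η ω

end IlliquidALM

namespace IlliquidALM

lemma etoENNReal_bot : etoENNReal ⊥ = 0 := by simp [etoENNReal]
lemma etoENNReal_top : etoENNReal ⊤ = ⊤ := by simp [etoENNReal]
lemma etoENNReal_coe (x : ℝ) : etoENNReal (x : EReal) = ENNReal.ofReal x := by
  simp [etoENNReal]

lemma etoENNReal_mono {x y : EReal} (h : x ≤ y) : etoENNReal x ≤ etoENNReal y := by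
  rcases eq_or_ne y ⊤ with hy | hy
  · simp [hy, etoENNReal]
  · rcases eq_or_ne x ⊥ with hx | hx
    · simp [hx, etoENNReal, hy]
    · have hx' : x ≠ ⊤ := fun h' => hy (top_le_iff.mp (h' ▸ h))
      unfold etoENNReal
      rw [if_neg hx', if_neg hy]
      exact ENNReal.ofReal_le_ofReal (EReal.toReal_le_toReal h hx hy)

lemma etoENNReal_add_le (x y : EReal) :
    etoENNReal (x + y) ≤ etoENNReal x + etoENNReal y := by
  rcases eq_or_ne x ⊤ with rfl | hx
  · simp [etoENNReal_top]
  rcases eq_or_ne y ⊤ with rfl | hy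
  · simp [etoENNReal_top]
  rcases eq_or_ne x ⊥ with rfl | hx'
  · simp [etoENNReal_bot, etoENNReal]
  rcases eq_or_ne y ⊥ with rfl | hy'
  · simp [etoENNReal_bot, etoENNReal]
  lift x to ℝ using ⟨hx, hx'⟩
  lift y to ℝ using ⟨hy, hy'⟩
  rw [← EReal.coe_add, etoENNReal_coe, etoENNReal_coe, etoENNReal_coe]
  exact ENNReal.ofReal_add_le

lemma etoENNReal_coe_mul_le {c : ℝ} (hc : 0 ≤ c) (x : EReal) :
    etoENNReal ((c : EReal) * x) ≤ ENNReal.ofReal c * etoENNReal x := by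
  rcases hc.eq_or_lt with rfl | hc
  · simp [etoENNReal, EReal.zero_mul]
  rcases eq_or_ne x ⊤ with rfl | hx
  · have hc0 : ENNReal.ofReal c ≠ 0 :=
      fun h => (ENNReal.ofReal_eq_zero.mp h).not_gt hc
    rw [EReal.coe_mul_top_of_pos hc, etoENNReal_top, ENNReal.mul_top hc0]
  rcases eq_or_ne x ⊥ with rfl | hx'
  · rw [EReal.coe_mul_bot_of_pos hc, etoENNReal_bot]
    exact zero_le
  lift x to ℝ using ⟨hx, hx'⟩
  rw [← EReal.coe_mul, etoENNReal_coe, etoENNReal_coe, ENNReal.ofReal_mul hc.le]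

lemma etoENNReal_interp {f : ℝ → EReal} (hf : EConvexOn f) {p t q : ℝ}
    (hpt : p ≤ t) (htq : t ≤ q) :
    etoENNReal (f t) ≤ etoENNReal (f p) + etoENNReal (f q) := by
  rcases eq_or_lt_of_le (hpt.trans htq) with hpq | hpq
  · have ht : t = p := le_antisymm (hpq ▸ htq) hpt
    rw [ht]; exact le_self_add
  · set d := q - p with hd
    have hd0 : 0 < d := sub_pos.mpr hpq
    set a := (q - t) / d with ha'
    set b := (t - p) / d with hb'
    have ha : 0 ≤ a := div_nonneg (sub_nonneg.mpr htq) hd0.le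
    have hb : 0 ≤ b := div_nonneg (sub_nonneg.mpr hpt) hd0.le
    have hab : a + b = 1 := by rw [ha', hb', ← add_div, div_eq_one_iff_eq hd0.ne', hd]; ring
    have hcomb : a • p + b • q = t := by
      simp only [smul_eq_mul, ha', hb', hd]; field_simp; ring
    have hconv := hf p q a b ha hb hab
    rw [hcomb] at hconv
    have ha1 : a ≤ 1 := by linarith
    have hb1 : b ≤ 1 := by linarith
    calc etoENNReal (f t) ≤ etoENNReal ((a : EReal) * f p + (b : EReal) * f q) :=
          etoENNReal_mono hconv
      _ ≤ etoENNReal ((a : EReal) * f p) + etoENNReal ((b : EReal) * f q) :=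
          etoENNReal_add_le _ _
      _ ≤ ENNReal.ofReal a * etoENNReal (f p) + ENNReal.ofReal b * etoENNReal (f q) :=
          add_le_add (etoENNReal_coe_mul_le ha _) (etoENNReal_coe_mul_le hb _)
      _ ≤ 1 * etoENNReal (f p) + 1 * etoENNReal (f q) := by
          gcongr
          · exact ENNReal.ofReal_le_one.mpr ha1
          · exact ENNReal.ofReal_le_one.mpr hb1
      _ = etoENNReal (f p) + etoENNReal (f q) := by rw [one_mul, one_mul]

lemma econv_line {n : ℕ} {W : (Fin n → ℝ) → EReal} (hW : EConvexOn W) (v : Fin n → ℝ) :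
    EConvexOn (fun η : ℝ => W (η • v)) := by
  intro x y a b ha hb hab
  have h := hW (x • v) (y • v) a b ha hb hab
  simpa [smul_smul, smul_eq_mul, add_smul] using h

lemma iter_bound (f : ℝ → EReal) {C l₀ : ℝ} (hC : 0 ≤ C) (S : Set ℝ) (η₀ : ℝ)
    (hmem : ∀ j : ℕ, l₀ ^ j * η₀ ∈ S)
    (hcond : ∀ η ∈ S, f (l₀ * η) ≤ (C : EReal) * f η) (k : ℕ) :
    etoENNReal (f (l₀ ^ k * η₀)) ≤ (ENNReal.ofReal C) ^ k * etoENNReal (f η₀) := by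
  induction k with
  | zero => simp
  | succ k ih =>
    have h1 := hcond _ (hmem k)
    have harg : l₀ ^ (k + 1) * η₀ = l₀ * (l₀ ^ k * η₀) := by ring
    calc etoENNReal (f (l₀ ^ (k + 1) * η₀))
        = etoENNReal (f (l₀ * (l₀ ^ k * η₀))) := by rw [harg]
      _ ≤ etoENNReal ((C : EReal) * f (l₀ ^ k * η₀)) := etoENNReal_mono h1
      _ ≤ ENNReal.ofReal C * etoENNReal (f (l₀ ^ k * η₀)) := etoENNReal_coe_mul_le hC _
      _ ≤ ENNReal.ofReal C * ((ENNReal.ofReal C) ^ k * etoENNReal (f η₀)) := by gcongr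
      _ = (ENNReal.ofReal C) ^ (k + 1) * etoENNReal (f η₀) := by ring

lemma eExp_ne_top_iff {Ω : Type*} [MeasurableSpace Ω] (P : Measure Ω) (f : Ω → EReal) :
    eExp P f ≠ ⊤ ↔ ∫⁻ ω, etoENNReal (f ω) ∂P ≠ ⊤ := by
  unfold eExp
  constructor
  · intro h hint
    rw [if_pos hint] at h
    exact h rfl
  · intro h
    rw [if_neg h]
    have h1 : ((∫⁻ ω, etoENNReal (f ω) ∂P : ℝ≥0∞) : EReal) ≠ ⊤ := by
      rwa [ne_eq, EReal.coe_ennreal_eq_top_iff]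
    have h2 : -((∫⁻ ω, etoENNReal (-f ω) ∂P : ℝ≥0∞) : EReal) ≠ ⊤ := by
      rw [ne_eq, EReal.neg_eq_top_iff]
      exact EReal.coe_ennreal_ne_bot _
    rw [sub_eq_add_neg]
    exact (EReal.add_lt_top h1 h2).ne

lemma measurable_etoENNReal : Measurable etoENNReal := by
  unfold etoENNReal
  exact Measurable.ite (measurableSet_singleton ⊤) measurable_const
    (ENNReal.measurable_ofReal.comp measurable_ereal_toReal)

/-- Lemma 4.1 / `lem:rrae`: the multivariate radial asymptotic
elasticity conditions imply stability of `dom EW` under scaling. -/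
theorem radial_asymptotic_elasticity
    {Ω : Type*} [MeasurableSpace Ω] (P : Measure Ω) [IsProbabilityMeasure P]
    (n : ℕ) (W : (Fin n → ℝ) → Ω → EReal)
    (hWmeas : JointlyMeasurable W)
    (hWlsc : ∀ᵐ ω ∂P, LowerSemicontinuous fun x => W x ω)
    (hWconv : ∀ᵐ ω ∂P, EConvexOn fun x => W x ω) :
    ((∀ y : Ω → Fin n → ℝ, Measurable y → eExp P (fun ω => W (y ω) ω) ≠ ⊤ →
        RAEplus P fun η ω => W (η • y ω) ω) →
      ∀ l : ℝ, 1 ≤ l → ∀ y : Ω → Fin n → ℝ, Measurable y →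
        eExp P (fun ω => W (y ω) ω) ≠ ⊤ →
        eExp P (fun ω => W (l • y ω) ω) ≠ ⊤) ∧
    ((∀ y : Ω → Fin n → ℝ, Measurable y → eExp P (fun ω => W (y ω) ω) ≠ ⊤ →
        RAEminus P fun η ω => W (η • y ω) ω) →
      ∀ l : ℝ, 0 < l → l ≤ 1 → ∀ y : Ω → Fin n → ℝ, Measurable y →
        eExp P (fun ω => W (y ω) ω) ≠ ⊤ →
        eExp P (fun ω => W (l • y ω) ω) ≠ ⊤) := by
  constructor
  · -- RAE+ branch
    intro hRAE l hl y hy hdom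
    obtain ⟨l₀, hl₀, ybar, hybar, hybardom, C, hC, hcond⟩ := hRAE y hy hdom
    rw [eExp_ne_top_iff] at hdom hybardom ⊢
    obtain ⟨k, hk⟩ := pow_unbounded_of_one_lt l hl₀
    set g₁ : Ω → ℝ≥0∞ := fun ω => etoENNReal (W (ybar ω • y ω) ω) with hg₁def
    set g₂ : Ω → ℝ≥0∞ := fun ω => etoENNReal (W (y ω) ω) with hg₂def
    set K : ℝ≥0∞ := 1 + (ENNReal.ofReal C) ^ k with hK
    have hKne : K ≠ ⊤ :=
      ENNReal.add_ne_top.mpr ⟨ENNReal.one_ne_top, ENNReal.pow_ne_top ENNReal.ofReal_ne_top⟩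
    have hl₀0 : (0:ℝ) < l₀ := lt_trans one_pos hl₀
    have hbound : ∀ᵐ ω ∂P, etoENNReal (W (l • y ω) ω) ≤ K * (g₁ ω + g₂ ω) := by
      filter_upwards [hWconv, hcond] with ω hconv hcd
      have hfconv : EConvexOn (fun η : ℝ => W (η • y ω) ω) := econv_line hconv (y ω)
      set f : ℝ → EReal := fun η : ℝ => W (η • y ω) ω with hfdef
      set η₀ : ℝ := max (ybar ω) 1 with hη₀def
      have hη₀1 : (1:ℝ) ≤ η₀ := le_max_right _ _
      have hmem : ∀ j : ℕ, l₀ ^ j * η₀ ∈ {η : ℝ | ybar ω ≤ η} := by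
        intro j
        have h1 : (1:ℝ) ≤ l₀ ^ j := one_le_pow₀ hl₀.le
        have h2 : η₀ ≤ l₀ ^ j * η₀ := le_mul_of_one_le_left (by linarith) h1
        exact le_trans (le_max_left _ _) h2
      have hiter := iter_bound f hC {η : ℝ | ybar ω ≤ η} η₀ hmem (fun η hη => hcd η hη) k
      have hq : l ≤ l₀ ^ k * η₀ :=
        hk.le.trans (le_mul_of_one_le_right (pow_pos hl₀0 k).le hη₀1)
      have hinterp := etoENNReal_interp hfconv hl hq
      have hf1 : f 1 = W (y ω) ω := by rw [hfdef]; simp [one_smul]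
      have hfη₀ : etoENNReal (f η₀) ≤ g₁ ω + g₂ ω := by
        rcases le_total (ybar ω) 1 with h | h
        · rw [hη₀def, max_eq_right h]
          exact le_of_le_of_eq (le_of_eq (congrArg etoENNReal hf1)) rfl |>.trans le_add_self
        · rw [hη₀def, max_eq_left h]
          exact le_self_add
      calc etoENNReal (W (l • y ω) ω)
          ≤ etoENNReal (f 1) + etoENNReal (f (l₀ ^ k * η₀)) := hinterp
        _ ≤ g₂ ω + (ENNReal.ofReal C) ^ k * (g₁ ω + g₂ ω) := by
            refine add_le_add (le_of_eq (congrArg etoENNReal hf1)) (hiter.trans ?_)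
            exact mul_le_mul_right hfη₀ _
        _ ≤ K * (g₁ ω + g₂ ω) := by
            rw [hK, add_mul, one_mul]
            exact add_le_add le_add_self le_rfl
    have hg₁m : Measurable g₁ := by
      apply measurable_etoENNReal.comp
      have hz : Measurable fun ω => ybar ω • y ω := by
        apply measurable_pi_lambda
        intro i
        exact hybar.mul ((measurable_pi_apply i).comp hy)
      exact hWmeas.comp (hz.prodMk measurable_id)
    have hfin : ∫⁻ ω, K * (g₁ ω + g₂ ω) ∂P ≠ ⊤ := by
      rw [lintegral_const_mul' _ _ hKne, lintegral_add_left hg₁m]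
      exact ENNReal.mul_ne_top hKne (ENNReal.add_ne_top.mpr ⟨hybardom, hdom⟩)
    exact ne_top_of_le_ne_top hfin (lintegral_mono_ae hbound)
  · -- RAE− branch
    intro hRAE l hl hl1 y hy hdom
    obtain ⟨l₀, hl₀0, hl₀1, ybar, hybar, hybardom, C, hC, hcond⟩ := hRAE y hy hdom
    rw [eExp_ne_top_iff] at hdom hybardom ⊢
    obtain ⟨k, hk⟩ := exists_pow_lt_of_lt_one hl hl₀1
    set g₁ : Ω → ℝ≥0∞ := fun ω => etoENNReal (W (ybar ω • y ω) ω) with hg₁def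
    set g₂ : Ω → ℝ≥0∞ := fun ω => etoENNReal (W (y ω) ω) with hg₂def
    set K : ℝ≥0∞ := 1 + (ENNReal.ofReal C) ^ k with hK
    have hKne : K ≠ ⊤ :=
      ENNReal.add_ne_top.mpr ⟨ENNReal.one_ne_top, ENNReal.pow_ne_top ENNReal.ofReal_ne_top⟩
    have hK1 : (1:ℝ≥0∞) ≤ K := le_self_add
    have hbound : ∀ᵐ ω ∂P, etoENNReal (W (l • y ω) ω) ≤ K * (g₁ ω + g₂ ω) := by
      filter_upwards [hWconv, hcond] with ω hconv hcd
      have hfconv : EConvexOn (fun η : ℝ => W (η • y ω) ω) := econv_line hconv (y ω)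
      set f : ℝ → EReal := fun η : ℝ => W (η • y ω) ω with hfdef
      have hf1 : f 1 = W (y ω) ω := by rw [hfdef]; simp [one_smul]
      rcases le_total (ybar ω) l with hyl | hly
      · -- ybar ω ≤ l : direct interpolation between ybar ω and 1
        have hinterp := etoENNReal_interp hfconv hyl hl1
        calc etoENNReal (W (l • y ω) ω)
            ≤ etoENNReal (f (ybar ω)) + etoENNReal (f 1) := hinterp
          _ = g₁ ω + g₂ ω := by rw [hf1]
          _ ≤ K * (g₁ ω + g₂ ω) := le_mul_of_one_le_left zero_le hK1
      · -- l ≤ ybar ω : iterate down from η₀ = min (ybar ω) 1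
        set η₀ : ℝ := min (ybar ω) 1 with hη₀def
        have hlη₀ : l ≤ η₀ := le_min hly hl1
        have hη₀pos : (0:ℝ) < η₀ := lt_of_lt_of_le hl hlη₀
        have hmem : ∀ j : ℕ, l₀ ^ j * η₀ ∈ {η : ℝ | 0 ≤ η ∧ η ≤ ybar ω} := by
          intro j
          constructor
          · positivity
          · have hpow : l₀ ^ j ≤ 1 := pow_le_one₀ hl₀0.le hl₀1.le
            have : l₀ ^ j * η₀ ≤ η₀ := mul_le_of_le_one_left hη₀pos.le hpow
            exact this.trans (min_le_left _ _)
        have hiter := iter_bound f hC.le {η : ℝ | 0 ≤ η ∧ η ≤ ybar ω} η₀ hmem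
          (fun η hη => hcd η hη.1 hη.2) k
        have hp : l₀ ^ k * η₀ ≤ l := by
          have h1 : l₀ ^ k * η₀ ≤ l₀ ^ k * 1 :=
            mul_le_mul_of_nonneg_left (min_le_right _ _) (pow_pos hl₀0 k).le
          rw [mul_one] at h1
          exact h1.trans hk.le
        have hinterp := etoENNReal_interp hfconv hp hl1
        have hfη₀ : etoENNReal (f η₀) ≤ g₁ ω + g₂ ω := by
          rcases le_total (ybar ω) 1 with h | h
          · rw [hη₀def, min_eq_left h]
            exact le_self_add
          · rw [hη₀def, min_eq_right h]
            exact (le_of_eq (congrArg etoENNReal hf1)).trans le_add_self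
        calc etoENNReal (W (l • y ω) ω)
            ≤ etoENNReal (f (l₀ ^ k * η₀)) + etoENNReal (f 1) := hinterp
          _ ≤ (ENNReal.ofReal C) ^ k * (g₁ ω + g₂ ω) + g₂ ω := by
              refine add_le_add (hiter.trans (mul_le_mul_right hfη₀ _))
                (le_of_eq (congrArg etoENNReal hf1))
          _ ≤ K * (g₁ ω + g₂ ω) := by
              rw [hK, add_mul, one_mul, add_comm ((g₁ ω + g₂ ω))]
              exact add_le_add le_rfl le_add_self
    have hg₁m : Measurable g₁ := by
      apply measurable_etoENNReal.comp
      have hz : Measurable fun ω => ybar ω • y ω := by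
        apply measurable_pi_lambda
        intro i
        exact hybar.mul ((measurable_pi_apply i).comp hy)
      exact hWmeas.comp (hz.prodMk measurable_id)
    have hfin : ∫⁻ ω, K * (g₁ ω + g₂ ω) ∂P ≠ ⊤ := by
      rw [lintegral_const_mul' _ _ hKne, lintegral_add_left hg₁m]
      exact ENNReal.mul_ne_top hKne (ENNReal.add_ne_top.mpr ⟨hybardom, hdom⟩)
    exact ne_top_of_le_ne_top hfin (lintegral_mono_ae hbound)


end IlliquidALM
end
end

section
/- Let D ⊆ E be a closed convex set containing the origin, let p ∈ E, and define π(c) := inf{α ∈ ℝ : c − αp ∈ D}. Then the following conditions are equivalent: (1) π is proper and lower semicontinuous; (2) π(0) > −∞; (3) p ∉ D^∞; (4) there exists q ∈ F with σ_D(q) < ∞ and ⟨p,q⟩ = 1. Moreover, these conditions imply the dual representation π(c) = sup{ ⟨c,q⟩ − σ_D(q) : q ∈ F, ⟨p,q⟩ = 1 } for every c ∈ E. -/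
open MeasureTheory

noncomputable section

namespace IlliquidALM

/-- Recession cone of a set. -/
def recCone {α : Type*} [Add α] [SMul ℝ α] (C : Set α) : Set α :=
  {z | ∀ d ∈ C, ∀ a : ℝ, 0 < a → d + a • z ∈ C}

/-- The function `π(c) = inf {α ∈ ℝ | c − αp ∈ D}`. -/
def piD {E : Type*} [AddCommGroup E] [Module ℝ E] (Dset : Set E) (p : E)
    (c : E) : EReal :=
  ⨅ a : {a : ℝ // c - a • p ∈ Dset}, (a.1 : EReal)

/-- The support function of `D ⊆ E` w.r.t. the pairing `B`. -/
def sigmaD {E F : Type*} [AddCommGroup E] [Module ℝ E] [AddCommGroup F] [Module ℝ F]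
    (B : E →ₗ[ℝ] F →ₗ[ℝ] ℝ) (Dset : Set E) (q : F) : EReal :=
  ⨆ c : Dset, ((B c.1 q : ℝ) : EReal)

section Aux
open Filter Topology

variable {E F : Type*} [AddCommGroup E] [Module ℝ E] [AddCommGroup F] [Module ℝ F]
variable (B : E →ₗ[ℝ] F →ₗ[ℝ] ℝ)

/-- Every continuous linear functional on the weak topology is represented by some `q : F`. -/
lemma exists_dual_rep (f : WeakBilin B →L[ℝ] ℝ) : ∃ q : F, ∀ x : E, f x = B x q := by
  classical
  have hmem : f ⁻¹' (Set.Ioo (-1 : ℝ) 1) ∈ 𝓝 (0 : WeakBilin B) := by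
    have h0 : Set.Ioo (-1 : ℝ) 1 ∈ 𝓝 (f 0) := by
      rw [_root_.map_zero]; exact Ioo_mem_nhds (by norm_num) (by norm_num)
    exact f.continuous.continuousAt.preimage_mem_nhds h0
  rw [(LinearMap.hasBasis_weakBilin B).mem_iff] at hmem
  obtain ⟨U, hU, hUsub⟩ := hmem
  obtain ⟨I, ε, hε, rfl⟩ := (SeminormFamily.basisSets_iff _).mp hU
  have hker : ∀ x : E, (∀ q ∈ I, B x q = 0) → f x = 0 := by
    intro x hx
    by_contra hfx
    have hball : ∀ r : ℝ, (r • x : WeakBilin B) ∈ (I.sup (B.toSeminormFamily)).ball 0 ε := by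
      intro r
      rw [Seminorm.mem_ball_zero]
      refine Seminorm.finset_sup_apply_lt hε ?_
      intro q hq
      rw [LinearMap.toSeminormFamily_apply]
      have : B (r • x) q = r * B x q := by rw [_root_.map_smul]; simp [smul_eq_mul]
      rw [this, hx q hq, mul_zero, norm_zero]; exact hε
    have h1 : ∀ r : ℝ, |r * f x| < 1 := by
      intro r
      have h2 := hUsub (hball r)
      replace h2 : -1 < f ((r : ℝ) • (x : WeakBilin B)) ∧ f ((r : ℝ) • (x : WeakBilin B)) < 1 := h2
      have h3 : f ((r : ℝ) • (x : WeakBilin B)) = r * f x := by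
        exact (_root_.map_smul f r (x : WeakBilin B)).trans (smul_eq_mul _ _)
      rw [h3] at h2
      rw [abs_lt]; exact ⟨h2.1, h2.2⟩
    have h4 := h1 (2 / f x)
    rw [div_mul_cancel₀ 2 hfx] at h4
    norm_num at h4
  set L : {q // q ∈ I} → E →ₗ[ℝ] ℝ := fun q => (B.flip q.1) with hL
  have hKer : (⨅ i, LinearMap.ker (L i)) ≤ LinearMap.ker (show E →ₗ[ℝ] ℝ from f.toLinearMap) := by
    intro x hxmem
    simp only [Submodule.mem_iInf] at hxmem
    have hx : ∀ q ∈ I, B x q = 0 := fun q hq => hxmem ⟨q, hq⟩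
    exact hker x hx
  have hspan := mem_span_of_iInf_ker_le_ker (𝕜 := ℝ) hKer
  obtain ⟨c, hc⟩ := (Submodule.mem_span_range_iff_exists_fun ℝ).1 hspan
  refine ⟨∑ i, c i • (i.1 : F), fun x => ?_⟩
  have h5 : (∑ i, c i • L i) x = f x := by rw [hc]; rfl
  rw [← h5]
  rw [_root_.map_sum (B x)]
  simp only [LinearMap.sum_apply, LinearMap.smul_apply, hL, LinearMap.flip_apply, _root_.map_smul,
    smul_eq_mul]

/-- A point on whose positive ray lies in a closed convex set containing 0 is in the
recession cone. -/
lemma mem_recCone_of_ray {Dset : Set (WeakBilin B)} (hclosed : IsClosed Dset)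
    (hconvex : Convex ℝ Dset) {z : WeakBilin B} (hz : ∀ a : ℝ, 0 < a → a • z ∈ Dset) :
    z ∈ recCone Dset := by
  intro d hd a ha
  have hmem : ∀ n : ℕ, ((1 - ((n : ℝ)+1)⁻¹) • d + a • z) ∈ Dset := by
    intro n
    have h1 : (0:ℝ) < ((n:ℝ)+1)⁻¹ := by positivity
    have h2 : ((n:ℝ)+1)⁻¹ ≤ 1 := by
      have hn : (0:ℝ) ≤ (n:ℝ) := Nat.cast_nonneg n
      have hmul : ((n:ℝ)+1)⁻¹ * ((n:ℝ)+1) = 1 := by field_simp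
      nlinarith
    have h3 := hconvex (a := 1 - ((n:ℝ)+1)⁻¹) (b := ((n:ℝ)+1)⁻¹) hd
      (hz (((n:ℝ)+1) * a) (by positivity)) (by linarith) h1.le (by ring)
    have h4 : ((n:ℝ)+1)⁻¹ • ((((n:ℝ)+1) * a) • z) = a • z := by
      rw [smul_smul, inv_mul_cancel_left₀ (by positivity)]
    rwa [h4] at h3
  have htend : Tendsto (fun n : ℕ => (1 - ((n:ℝ)+1)⁻¹) • d + a • z) atTop
      (𝓝 (d + a • z)) := by
    have h0 : Tendsto (fun n : ℕ => (1 - ((n:ℝ)+1)⁻¹)) atTop (𝓝 1) := by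
      have h1 : Tendsto (fun n : ℕ => ((n:ℝ)+1)⁻¹) atTop (𝓝 0) := by
        simpa [one_div] using tendsto_one_div_add_atTop_nhds_zero_nat (𝕜 := ℝ)
      simpa using (tendsto_const_nhds (x := (1:ℝ))).sub h1
    have h2 := (h0.smul_const d).add_const (a • z)
    simpa [one_smul] using h2
  exact hclosed.mem_of_tendsto htend (Filter.Eventually.of_forall hmem)

/-- The sublevel-type set `{x | ∃ α ≤ t, x − αp ∈ D}` is weakly closed, provided the pairing
admits a functional normalizing `p` and bounded on `D`. -/
lemma Lset_closed {Dset : Set (WeakBilin B)} (hclosed : IsClosed Dset)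
    {p : WeakBilin B} {q' : F} {M : ℝ} (hq' : ∀ d ∈ Dset, B d q' ≤ M) (hpq : B p q' = 1)
    (t : ℝ) :
    IsClosed {x : WeakBilin B | ∃ a : ℝ, a ≤ t ∧ x - a • p ∈ Dset} := by
  classical
  rw [isClosed_iff_clusterPt]
  intro x hx
  set s : Set (WeakBilin B) := {x | ∃ a : ℝ, a ≤ t ∧ x - a • p ∈ Dset} with hs
  haveI : (𝓝 x ⊓ 𝓟 s).NeBot := hx
  set U : Ultrafilter (WeakBilin B) := Ultrafilter.of (𝓝 x ⊓ 𝓟 s) with hUdef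
  have hUle : (U : Filter (WeakBilin B)) ≤ 𝓝 x ⊓ 𝓟 s := Ultrafilter.of_le _
  have h1 : (U : Filter (WeakBilin B)) ≤ 𝓝 x := hUle.trans inf_le_left
  have h2 : ∀ᶠ y in (U : Filter (WeakBilin B)), y ∈ s := le_principal_iff.mp (hUle.trans inf_le_right)
  set g : WeakBilin B → ℝ := fun y =>
    if h : ∃ a : ℝ, a ≤ t ∧ y - a • p ∈ Dset then h.choose else 0 with hg
  have hgspec : ∀ y ∈ s, g y ≤ t ∧ y - g y • p ∈ Dset := by
    intro y hy
    have hy' : ∃ a : ℝ, a ≤ t ∧ y - a • p ∈ Dset := hy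
    simp only [hg, dif_pos hy']
    exact ⟨hy'.choose_spec.1, hy'.choose_spec.2⟩
  have hge : ∀ y ∈ s, B y q' - M ≤ g y := by
    intro y hy
    have h3 := hq' _ (hgspec y hy).2
    have h4 : B (y - g y • p) q' = B y q' - g y := by
      have e : ∀ (u v : E) (a : ℝ), B v q' = 1 → B (u - a • v) q' = B u q' - a := by
        intro u v a hv; simp [hv]
      exact e y p (g y) hpq
    rw [h4] at h3
    linarith
  have hcont : Tendsto (fun y : WeakBilin B => B y q') (U : Filter (WeakBilin B)) (𝓝 (B x q')) :=
    ((WeakBilin.eval_continuous B q').tendsto x).mono_left h1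
  have hev : ∀ᶠ y in (U : Filter (WeakBilin B)), g y ∈ Set.Icc (B x q' - M - 1) t := by
    have hev1 : ∀ᶠ y in (U : Filter (WeakBilin B)), B x q' - 1 ≤ B y q' :=
      hcont (eventually_ge_nhds (by linarith : B x q' - 1 < B x q'))
    filter_upwards [hev1, h2] with y hy1 hy2
    have hy1' : B x q' - 1 ≤ B y q' := hy1
    exact ⟨by linarith [hge y hy2], (hgspec y hy2).1⟩
  have hcomp : IsCompact (Set.Icc (B x q' - M - 1) t) := isCompact_Icc
  obtain ⟨α₀, hα₀K, hα₀⟩ := hcomp.ultrafilter_le_nhds (U.map g)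
    (by rw [Ultrafilter.coe_map, le_principal_iff, mem_map]; exact hev)
  have htg : Tendsto g (U : Filter (WeakBilin B)) (𝓝 α₀) := by rwa [Ultrafilter.coe_map] at hα₀
  have hxt : Tendsto (fun y : WeakBilin B => y - g y • p) (U : Filter (WeakBilin B)) (𝓝 (x - α₀ • p)) :=
    (tendsto_id'.mpr h1).sub (htg.smul_const p)
  have hmem : x - α₀ • p ∈ Dset :=
    hclosed.mem_of_tendsto hxt (by filter_upwards [h2] with y hy using (hgspec y hy).2)
  exact ⟨α₀, hα₀K.2, hmem⟩

/-- Strict separation of a point from a weakly closed convex set, with the separating functional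
realized by an element of `F`. -/
lemma sep_point {s : Set (WeakBilin B)} (hconv : Convex ℝ s) (hcl : IsClosed s)
    {c : WeakBilin B} (hc : c ∉ s) : ∃ (q : F) (u : ℝ), (∀ x ∈ s, B x q < u) ∧ u < B c q := by
  obtain ⟨f, u, hf, hfc⟩ := geometric_hahn_banach_closed_point hconv hcl hc
  obtain ⟨q, hq⟩ := exists_dual_rep B f
  exact ⟨q, u, fun x hx => (hq x) ▸ hf x hx, (hq c) ▸ hfc⟩

end Aux

/-- Lemma A.3 / `lem:piD`: for a weakly closed convex set `D ∋ 0` in a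
separating duality `⟨E,F⟩`, the conditions (1)–(4) on `π(c) = inf{α | c − αp ∈ D}` are
equivalent and imply the dual representation of `π`. -/
theorem piD_duality
    {E F : Type*} [AddCommGroup E] [Module ℝ E] [AddCommGroup F] [Module ℝ F]
    (B : E →ₗ[ℝ] F →ₗ[ℝ] ℝ)
    (hsep₁ : ∀ c : E, c ≠ 0 → ∃ q : F, B c q ≠ 0)
    (hsep₂ : ∀ q : F, q ≠ 0 → ∃ c : E, B c q ≠ 0)
    (Dset : Set E)
    (hclosed : IsClosed {c : WeakBilin B | c ∈ Dset})
    (hconvex : Convex ℝ Dset) (hzero : (0 : E) ∈ Dset) (p : E) :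
    -- (1) ↔ (2)
    ((((∀ c : E, piD Dset p c ≠ ⊥) ∧ (∃ c : E, piD Dset p c ≠ ⊤)) ∧
        LowerSemicontinuous fun c : WeakBilin B => piD Dset p c) ↔
      piD Dset p 0 ≠ ⊥) ∧
    -- (2) ↔ (3)
    ((piD Dset p 0 ≠ ⊥) ↔ p ∉ recCone Dset) ∧
    -- (3) ↔ (4)
    ((p ∉ recCone Dset) ↔ ∃ q : F, sigmaD B Dset q ≠ ⊤ ∧ B p q = 1) ∧
    -- the dual representation
    ((piD Dset p 0 ≠ ⊥) →
      ∀ c : E, piD Dset p c =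
        ⨆ q : {q : F // B p q = 1},
          (((B c q.1 : ℝ) : EReal) - sigmaD B Dset q.1)) := by

  classical
  have hpi : ∀ c : E, piD Dset p c = ⨅ a : {a : ℝ // c - a • p ∈ Dset}, (a.1 : EReal) :=
    fun _ => rfl
  have hsig : ∀ q : F, sigmaD B Dset q = ⨆ c : Dset, ((B c.1 q : ℝ) : EReal) := fun _ => rfl
  -- basic facts about piD
  have hpiD_le : ∀ (c : E) (a : ℝ), c - a • p ∈ Dset → piD Dset p c ≤ (a : EReal) := by
    intro c a h
    rw [hpi]
    exact iInf_le _ (⟨a, h⟩ : {a : ℝ // c - a • p ∈ Dset})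
  have hpiD0 : piD Dset p 0 ≤ (0 : EReal) := by
    have h0 : (0 : E) - (0 : ℝ) • p ∈ Dset := by simpa using hzero
    simpa using hpiD_le 0 0 h0
  -- basic facts about sigmaD
  have hsigma_nonneg : ∀ q : F, (0 : EReal) ≤ sigmaD B Dset q := by
    intro q
    have h1 := le_iSup (fun c : Dset => ((B c.1 q : ℝ) : EReal)) ⟨0, hzero⟩
    rw [hsig]
    simpa using h1
  have hsigma_ne_bot : ∀ q : F, sigmaD B Dset q ≠ ⊥ := by
    intro q h
    have := hsigma_nonneg q
    rw [h, le_bot_iff] at this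
    exact absurd this (by norm_num)
  have hsigma_le : ∀ (q : F) (M : ℝ), (∀ d ∈ Dset, B d q ≤ M) → sigmaD B Dset q ≤ (M : EReal) := by
    intro q M h
    rw [hsig]
    exact iSup_le fun d => by exact_mod_cast h d.1 d.2
  have hsigma_mem_le : ∀ (q : F) (d : E), d ∈ Dset → ((B d q : ℝ) : EReal) ≤ sigmaD B Dset q := by
    intro q d hd
    rw [hsig]
    exact le_iSup (fun c : Dset => ((B c.1 q : ℝ) : EReal)) ⟨d, hd⟩
  have hsigma_bound : ∀ q : F, sigmaD B Dset q ≠ ⊤ → ∃ M : ℝ, ∀ d ∈ Dset, B d q ≤ M := by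
    intro q hq
    refine ⟨(sigmaD B Dset q).toReal, fun d hd => ?_⟩
    have h1 := hsigma_mem_le q d hd
    rw [← EReal.coe_toReal hq (hsigma_ne_bot q)] at h1
    exact_mod_cast h1
  -- key EReal inequality helper
  have hcoe_sub_le : ∀ (r m : ℝ) (σ : EReal), σ ≠ ⊥ → σ ≤ (m : EReal) →
      ((r - m : ℝ) : EReal) ≤ (r : EReal) - σ := by
    intro r m σ hb hm
    have ht : σ ≠ ⊤ := ne_top_of_le_ne_top (EReal.coe_ne_top m) hm
    rw [← EReal.coe_toReal ht hb] at hm ⊢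
    rw [← EReal.coe_sub]
    have : σ.toReal ≤ m := by exact_mod_cast hm
    exact_mod_cast (by linarith : r - m ≤ r - σ.toReal)
  -- recession cone characterization
  have hrec : p ∈ recCone Dset ↔ ∀ a : ℝ, 0 < a → a • p ∈ Dset := by
    constructor
    · intro hp a ha
      simpa using hp 0 hzero a ha
    · intro h
      exact mem_recCone_of_ray B hclosed hconvex h
  -- (2) ↔ (3)
  have h23 : (piD Dset p 0 ≠ ⊥) ↔ p ∉ recCone Dset := by
    constructor
    · intro h2 hp
      apply h2
      rw [hpi, iInf_eq_bot]
      intro b hb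
      obtain ⟨m, _, hm2⟩ := EReal.exists_between_coe_real hb
      have hmem : (0 : E) - (-(|m| + 1)) • p ∈ Dset := by
        rw [zero_sub, ← neg_smul, neg_neg]
        simpa using hp 0 hzero (|m| + 1) (by positivity)
      refine ⟨⟨-(|m| + 1), hmem⟩, lt_trans ?_ hm2⟩
      exact_mod_cast (by cases abs_cases m <;> linarith : -(|m| + 1) < m)
    · intro h3 hbot
      apply h3
      apply hrec.mpr
      intro a ha
      rw [hpi, iInf_eq_bot] at hbot
      obtain ⟨i, hi⟩ := hbot ((-a : ℝ) : EReal) (EReal.bot_lt_coe _)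
      have hib : i.1 < -a := by exact_mod_cast hi
      have hmem : (-i.1) • p ∈ Dset := by
        have := i.2
        rwa [zero_sub, ← neg_smul] at this
      have hbpos : 0 < -i.1 := by linarith
      set lam := a / (-i.1) with hlam
      have hlam1 : 0 < lam := div_pos ha hbpos
      have hlam2 : lam < 1 := (div_lt_one hbpos).mpr (by linarith)
      have hcc := hconvex (a := lam) (b := 1 - lam) hmem hzero hlam1.le (by linarith) (by ring)
      rw [smul_zero, add_zero, smul_smul] at hcc
      have hla : lam * -i.1 = a := by
        rw [hlam]; exact div_mul_cancel₀ a (ne_of_gt hbpos)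
      rwa [hla] at hcc
  -- (3) ↔ (4)
  have h34 : (p ∉ recCone Dset) ↔ ∃ q : F, sigmaD B Dset q ≠ ⊤ ∧ B p q = 1 := by
    constructor
    · intro h3
      have hex : ∃ a : ℝ, 0 < a ∧ a • p ∉ Dset := by
        by_contra hcon
        push_neg at hcon
        exact h3 (hrec.mpr hcon)
      obtain ⟨a, ha, hap⟩ := hex
      obtain ⟨q₀, u, hq₀, hcq₀⟩ := sep_point B hconvex hclosed hap
      have hu : 0 < u := by
        calc (0:ℝ) = B (0:E) q₀ := by simp
        _ < u := hq₀ 0 hzero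
      have hBpa : B (a • p) q₀ = a * B p q₀ := by
        rw [_root_.map_smul]; simp [smul_eq_mul]
      rw [hBpa] at hcq₀
      have hβ : 0 < B p q₀ := by nlinarith
      refine ⟨(B p q₀)⁻¹ • q₀, ?_, ?_⟩
      · have hb : ∀ d ∈ Dset, B d ((B p q₀)⁻¹ • q₀) ≤ (B p q₀)⁻¹ * u := by
          intro d hd
          rw [_root_.map_smul, smul_eq_mul]
          exact mul_le_mul_of_nonneg_left (hq₀ d hd).le (inv_nonneg.mpr hβ.le)
        exact ne_top_of_le_ne_top (EReal.coe_ne_top _) (hsigma_le _ _ hb)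
      · rw [_root_.map_smul, smul_eq_mul]
        field_simp
    · rintro ⟨q, hqt, hpq⟩ hp
      apply hqt
      have hge : ∀ m : ℝ, (m : EReal) ≤ sigmaD B Dset q := by
        intro m
        have ha : (0:ℝ) < max m 1 := lt_of_lt_of_le one_pos (le_max_right _ _)
        have hmem : (max m 1) • p ∈ Dset := by simpa using hp 0 hzero _ ha
        have h1 := hsigma_mem_le q _ hmem
        have hval : B ((max m 1) • p) q = max m 1 := by
          rw [_root_.map_smul]; simp [smul_eq_mul, hpq]
        rw [hval] at h1
        exact le_trans (by exact_mod_cast le_max_left m 1) h1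
      by_contra htop
      obtain ⟨z, hz1, _⟩ := EReal.exists_between_coe_real (lt_top_iff_ne_top.mpr htop)
      exact absurd (hge z) (not_le.mpr hz1)
  -- properness from (4)
  have hproper : (∃ q : F, sigmaD B Dset q ≠ ⊤ ∧ B p q = 1) → ∀ c : E, piD Dset p c ≠ ⊥ := by
    rintro ⟨q, hqt, hpq⟩ c
    obtain ⟨M, hM⟩ := hsigma_bound q hqt
    have hlow : ((B c q - M : ℝ) : EReal) ≤ piD Dset p c := by
      rw [hpi]
      apply le_iInf
      rintro ⟨a, ha⟩
      have h1 := hM _ ha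
      have h2 : B (c - a • p) q = B c q - a := by
        simp [_root_.map_sub, _root_.map_smul, LinearMap.sub_apply, LinearMap.smul_apply, smul_eq_mul, hpq]
      rw [h2] at h1
      exact_mod_cast (by linarith : B c q - M ≤ a)
    intro hbot
    rw [hbot, le_bot_iff] at hlow
    exact EReal.coe_ne_bot _ hlow
  -- convexity of the sublevel-type sets
  have hLconv : ∀ t : ℝ, Convex ℝ {x : E | ∃ a : ℝ, a ≤ t ∧ x - a • p ∈ Dset} := by
    intro t x₁ hx₁ x₂ hx₂ θ₁ θ₂ hθ₁ hθ₂ hsum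
    obtain ⟨a₁, ha₁, hm₁⟩ := hx₁
    obtain ⟨a₂, ha₂, hm₂⟩ := hx₂
    refine ⟨θ₁ * a₁ + θ₂ * a₂, ?_, ?_⟩
    · have e1 : θ₁ * a₁ ≤ θ₁ * t := mul_le_mul_of_nonneg_left ha₁ hθ₁
      have e2 : θ₂ * a₂ ≤ θ₂ * t := mul_le_mul_of_nonneg_left ha₂ hθ₂
      have e3 : θ₁ * t + θ₂ * t = t := by rw [← add_mul, hsum, one_mul]
      linarith
    · have hcc := hconvex hm₁ hm₂ hθ₁ hθ₂ hsum
      have heq : θ₁ • (x₁ - a₁ • p) + θ₂ • (x₂ - a₂ • p)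
          = (θ₁ • x₁ + θ₂ • x₂) - (θ₁ * a₁ + θ₂ * a₂) • p := by
        module
      rwa [heq] at hcc
  -- membership facts about sublevel sets
  have hnotL : ∀ (c : E) (t : ℝ), (t : EReal) < piD Dset p c →
      c ∉ {x : E | ∃ a : ℝ, a ≤ t ∧ x - a • p ∈ Dset} := by
    rintro c t h ⟨a, hat, hmem⟩
    have h1 := hpiD_le c a hmem
    have h2 : ((a : ℝ) : EReal) ≤ (t : EReal) := by exact_mod_cast hat
    exact absurd (le_trans h1 h2) (not_le.mpr h)
  have hLlow : ∀ (c : E) (t : ℝ), c ∉ {x : E | ∃ a : ℝ, a ≤ t ∧ x - a • p ∈ Dset} →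
      (t : EReal) ≤ piD Dset p c := by
    intro c t hc
    rw [hpi]
    apply le_iInf
    rintro ⟨a, ha⟩
    by_contra hlt
    push_neg at hlt
    have hat : a < t := by exact_mod_cast hlt
    exact hc ⟨a, hat.le, ha⟩
  -- dual representation from (4)
  have hdual4 : (∃ q : F, sigmaD B Dset q ≠ ⊤ ∧ B p q = 1) → ∀ c : E,
      piD Dset p c = ⨆ q : {q : F // B p q = 1},
        (((B c q.1 : ℝ) : EReal) - sigmaD B Dset q.1) := by
    rintro ⟨qs, hqst, hqsp⟩ c
    obtain ⟨M, hM⟩ := hsigma_bound qs hqst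
    -- helper : any normalized q with bound m gives a lower bound on the sup
    have hterm_le : ∀ (q : F) (m : ℝ), B p q = 1 → (∀ d ∈ Dset, B d q ≤ m) →
        ((B c q - m : ℝ) : EReal) ≤ ⨆ qq : {q : F // B p q = 1},
          (((B c qq.1 : ℝ) : EReal) - sigmaD B Dset qq.1) := by
      intro q m hpq1 hbd
      have h1 := hcoe_sub_le (B c q) m (sigmaD B Dset q) (hsigma_ne_bot q) (hsigma_le q m hbd)
      exact h1.trans (le_iSup (fun qq : {q : F // B p q = 1} =>
        (((B c qq.1 : ℝ) : EReal) - sigmaD B Dset qq.1)) ⟨q, hpq1⟩)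
    apply le_antisymm
    · -- hard direction: piD ≤ sup
      by_contra hlt
      push_neg at hlt
      obtain ⟨t, ht1, ht2⟩ := EReal.exists_between_coe_real hlt
      have hcnot : c ∉ {x : E | ∃ a : ℝ, a ≤ t ∧ x - a • p ∈ Dset} := hnotL c t ht2
      obtain ⟨q₀, u, hq₀, hcq₀⟩ := sep_point B (hLconv t)
        (Lset_closed B hclosed hM hqsp t) hcnot
      have hLel : ∀ d ∈ Dset, ∀ α : ℝ, α ≤ t → B d q₀ + α * B p q₀ < u := by
        intro d hd α hα
        have hmem : (d + α • p) ∈ {x : E | ∃ a : ℝ, a ≤ t ∧ x - a • p ∈ Dset} :=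
          ⟨α, hα, by simpa using hd⟩
        have h1 := hq₀ _ hmem
        rwa [_root_.map_add, LinearMap.add_apply, _root_.map_smul, LinearMap.smul_apply, smul_eq_mul] at h1
      have hβ : 0 ≤ B p q₀ := by
        by_contra hneg
        push_neg at hneg
        have h1 := hLel 0 hzero (min t ((u + 1) / B p q₀)) (min_le_left _ _)
        rw [_root_.map_zero, LinearMap.zero_apply, zero_add] at h1
        have h2 : min t ((u + 1) / B p q₀) ≤ (u + 1) / B p q₀ := min_le_right _ _
        have h4 := mul_le_mul_of_nonpos_right h2 (le_of_lt hneg)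
        rw [div_mul_cancel₀ (u + 1) (ne_of_lt hneg)] at h4
        linarith
      have hDu : ∀ d ∈ Dset, B d q₀ ≤ u - t * B p q₀ := by
        intro d hd
        linarith [hLel d hd t le_rfl]
      have hnotsup : ∀ v : ℝ, t < v → ¬ ((v : EReal) ≤ ⨆ qq : {q : F // B p q = 1},
          (((B c qq.1 : ℝ) : EReal) - sigmaD B Dset qq.1)) := by
        intro v hv hle
        have : ((v : ℝ) : EReal) < (t : EReal) := lt_of_le_of_lt hle ht1
        have : v < t := by exact_mod_cast this
        linarith
      rcases lt_or_eq_of_le hβ with hβpos | hβ0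
      · -- case β > 0
        set q : F := (B p q₀)⁻¹ • q₀ with hqdef
        have hpq1 : B p q = 1 := by
          rw [hqdef, _root_.map_smul, smul_eq_mul]
          field_simp
        have hbd : ∀ d ∈ Dset, B d q ≤ (B p q₀)⁻¹ * (u - t * B p q₀) := by
          intro d hd
          rw [hqdef, _root_.map_smul, smul_eq_mul]
          exact mul_le_mul_of_nonneg_left (hDu d hd) (inv_nonneg.mpr hβpos.le)
        have hval : t < B c q - (B p q₀)⁻¹ * (u - t * B p q₀) := by
          rw [hqdef, _root_.map_smul, smul_eq_mul]
          have h1 : (B p q₀)⁻¹ * u < (B p q₀)⁻¹ * B c q₀ :=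
            mul_lt_mul_of_pos_left hcq₀ (inv_pos.mpr hβpos)
          have h2 : (B p q₀)⁻¹ * (t * B p q₀) = t := by field_simp
          calc t = (B p q₀)⁻¹ * u - (B p q₀)⁻¹ * u + t := by ring
          _ < (B p q₀)⁻¹ * B c q₀ - (B p q₀)⁻¹ * u + t := by linarith
          _ = (B p q₀)⁻¹ * B c q₀ - (B p q₀)⁻¹ * (u - t * B p q₀) := by
              rw [mul_sub, h2]; ring
        refine hnotsup _ hval ?_
        exact hterm_le q _ hpq1 hbd
      · -- case β = 0
        have hDu0 : ∀ d ∈ Dset, B d q₀ ≤ u := by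
          intro d hd
          have := hDu d hd
          rw [← hβ0] at this
          simpa using this
        have hu0 : 0 < u := by
          have := hLel 0 hzero t le_rfl
          rw [_root_.map_zero, LinearMap.zero_apply, zero_add, ← hβ0, mul_zero] at this
          linarith
        have he : 0 < B c q₀ - u := by linarith
        set θ : ℝ := max 1 ((t + 1 + M - B c qs) / (B c q₀ - u)) with hθdef
        have hθ1 : (1:ℝ) ≤ θ := le_max_left _ _
        have hθpos : 0 < θ := lt_of_lt_of_le one_pos hθ1
        have hθge : t + 1 + M - B c qs ≤ θ * (B c q₀ - u) := by
          have h1 : (t + 1 + M - B c qs) / (B c q₀ - u) ≤ θ := le_max_right _ _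
          calc t + 1 + M - B c qs = ((t + 1 + M - B c qs) / (B c q₀ - u)) * (B c q₀ - u) := by
                field_simp
          _ ≤ θ * (B c q₀ - u) := mul_le_mul_of_nonneg_right h1 he.le
        set q : F := qs + θ • q₀ with hqdef
        have hpq1 : B p q = 1 := by
          rw [hqdef, _root_.map_add, _root_.map_smul, smul_eq_mul, hqsp, ← hβ0]
          ring
        have hbd : ∀ d ∈ Dset, B d q ≤ M + θ * u := by
          intro d hd
          rw [hqdef, _root_.map_add, _root_.map_smul, smul_eq_mul]
          have h1 := hM d hd
          have h2 := hDu0 d hd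
          nlinarith
        have hval : t < B c q - (M + θ * u) := by
          rw [hqdef, _root_.map_add, _root_.map_smul, smul_eq_mul]
          nlinarith
        refine hnotsup _ hval ?_
        exact hterm_le q _ hpq1 hbd
    · -- easy direction: sup ≤ piD
      apply iSup_le
      rintro ⟨q, hq1⟩
      rw [hpi]
      apply le_iInf
      rintro ⟨a, ha⟩
      have h0 : B (c - a • p) q = B c q - a := by
        simp [_root_.map_sub, _root_.map_smul, LinearMap.sub_apply, LinearMap.smul_apply, smul_eq_mul, hq1]
      have h1 : ((B c q - a : ℝ) : EReal) ≤ sigmaD B Dset q := by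
        have := hsigma_mem_le q _ ha
        rwa [h0] at this
      by_cases htop : sigmaD B Dset q = ⊤
      · rw [htop, EReal.sub_top]
        exact bot_le
      · rw [← EReal.coe_toReal htop (hsigma_ne_bot q)] at h1 ⊢
        rw [← EReal.coe_sub]
        have h2 : B c q - a ≤ (sigmaD B Dset q).toReal := by exact_mod_cast h1
        exact_mod_cast (by linarith : B c q - (sigmaD B Dset q).toReal ≤ a)
  -- lower semicontinuity from (4)
  have hlsc4 : (∃ q : F, sigmaD B Dset q ≠ ⊤ ∧ B p q = 1) →
      LowerSemicontinuous fun c : WeakBilin B => piD Dset p c := by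
    intro h4
    obtain ⟨qs, hqst, hqsp⟩ := h4
    obtain ⟨M, hM⟩ := hsigma_bound qs hqst
    intro x y hy
    rcases eq_or_ne y ⊥ with rfl | hyb
    · exact Filter.Eventually.of_forall fun c =>
        bot_lt_iff_ne_bot.mpr (hproper ⟨qs, hqst, hqsp⟩ c)
    · obtain ⟨t, ht1, ht2⟩ := EReal.exists_between_coe_real hy
      have hcl := Lset_closed B hclosed hM hqsp t
      have hxmem := hnotL x t ht2
      filter_upwards [hcl.isOpen_compl.mem_nhds hxmem] with c hc
      exact lt_of_lt_of_le ht1 (hLlow c t hc)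
  -- assembling everything
  refine ⟨?_, h23, h34, fun h2 => hdual4 (h34.mp (h23.mp h2)) ⟩
  constructor
  · rintro ⟨⟨hne, _⟩, _⟩
    exact hne 0
  · intro h2
    have h4 := h34.mp (h23.mp h2)
    refine ⟨⟨hproper h4, ⟨0, ?_⟩⟩, hlsc4 h4⟩
    exact ne_top_of_le_ne_top (by simp : ((0:ℝ) : EReal) ≠ ⊤) hpiD0

end IlliquidALM
end
end
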